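/- For the (n−1)-gluing graph K_n +_{n−1} K'_n of two complete graphs on n vertices (n ≥ 5), the Ricci curvature of any edge (u_1, u_2) within K_n with u_1, u_2 ≠ u_0 and both adjacent to v_0 equals (n−1)/n. -/

import Mathlib

open scoped Classical
noncomputable section

namespace OR

variable {V : Type*}

/-- The degree of a vertex. -/
def deg (G : SimpleGraph V) (x : V) : ℕ := Nat.card (G.neighborSet x)

/-- The simple random walk measure at a vertex. -/
def rw (G : SimpleGraph V) (x : V) : V → ℝ :=
  fun v => if G.Adj x v then ((deg G x : ℝ))⁻¹ else 0

/-- A coupling between two measures on the vertex set. -/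
def IsCoupling (μ ν : V → ℝ) (A : V → V → ℝ) : Prop :=
  (∀ u v, 0 ≤ A u v) ∧
  (Function.support fun p : V × V => A p.1 p.2).Finite ∧
  (∀ u, ∑ᶠ v, A u v = μ u) ∧ (∀ v, ∑ᶠ u, A u v = ν v)

/-- The 1-Wasserstein distance w.r.t. the graph distance. -/
def W (G : SimpleGraph V) (μ ν : V → ℝ) : ℝ :=
  sInf { r | ∃ A, IsCoupling μ ν A ∧ r = ∑ᶠ u, ∑ᶠ v, A u v * (G.dist u v : ℝ) }

/-- The Ollivier–Ricci curvature. -/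
def ricci (G : SimpleGraph V) (x y : V) : ℝ :=
  1 - W G (rw G x) (rw G y) / (G.dist x y : ℝ)

/-- The number of common neighbours of `x` and `y`. -/
def tri (G : SimpleGraph V) (x y : V) : ℕ := Nat.card {w | G.Adj x w ∧ G.Adj y w}



/-- Condition for a cross edge `u_i v_j` in the `m`-gluing graph. -/
def cross (m : ℕ) {n : ℕ} (i j : Fin n) : Prop :=
  ((i : ℕ) = 0 ∧ (j : ℕ) = 0) ∨ ((i : ℕ) = 0 ∧ 1 ≤ (j : ℕ) ∧ (j : ℕ) ≤ m) ∨
    ((j : ℕ) = 0 ∧ 1 ≤ (i : ℕ) ∧ (i : ℕ) ≤ m)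

/-- Adjacency of the `m`-gluing graph: `Sum.inl` is `K_n`, `Sum.inr` is `K'_n`. -/
def glueAdj (n m : ℕ) : Fin n ⊕ Fin n → Fin n ⊕ Fin n → Prop
  | .inl i, .inl j => i ≠ j
  | .inr i, .inr j => i ≠ j
  | .inl i, .inr j => cross m i j
  | .inr j, .inl i => cross m i j

/-- The `m`-gluing graph `K_n +_m K'_n`. -/
def glue (n m : ℕ) : SimpleGraph (Fin n ⊕ Fin n) where
  Adj := glueAdj n m
  symm := by
    constructor
    rintro (i | i) (j | j) h <;> simp only [glueAdj] at h ⊢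
    · exact h.symm
    · exact h
    · exact h
    · exact h.symm
  loopless := by
    constructor
    rintro (i | i) h <;> simp only [glueAdj] at h <;> exact h rfl

end OR



open OR Sum SimpleGraph

variable {n : ℕ}

lemma cross_iff' (i j : Fin n) (hi : (i:ℕ) ≠ 0) :
    OR.cross (n-1) i j ↔ (j:ℕ) = 0 := by
  unfold OR.cross
  have : (i:ℕ) < n := i.isLt
  constructor
  · rintro (⟨h,h'⟩|⟨h,h'⟩|⟨h,h'⟩) <;> first | exact absurd h hi | exact h
  · intro h
    exact Or.inr (Or.inr ⟨h, Nat.one_le_iff_ne_zero.mpr hi, by omega⟩)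

lemma glue_adj_ll (m : ℕ) (i j : Fin n) : (OR.glue n m).Adj (inl i) (inl j) ↔ i ≠ j := Iff.rfl

lemma glue_adj_lr (m : ℕ) (i j : Fin n) : (OR.glue n m).Adj (inl i) (inr j) ↔ OR.cross m i j := Iff.rfl

lemma nbhd [NeZero n] (u : Fin n) (hu : (u:ℕ) ≠ 0) :
    (OR.glue n (n-1)).neighborSet (inl u) = Sum.inl '' {u}ᶜ ∪ {Sum.inr (0 : Fin n)} := by
  ext w
  cases w with
  | inl j =>
      simp [SimpleGraph.neighborSet, glue_adj_ll, ne_comm]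
  | inr j =>
      show (OR.glue n (n-1)).Adj (inl u) (inr j) ↔ _
      rw [glue_adj_lr, cross_iff' u j hu]
      simp only [Set.mem_union, Set.mem_image, Set.mem_singleton_iff, Sum.inr.injEq, reduceCtorEq, and_false, false_and, exists_false, false_or, or_false]
      exact ⟨fun h => Fin.ext (by simp [h]), fun h => by simp [h]⟩

lemma deg_eq [NeZero n] (u : Fin n) (hu : (u:ℕ) ≠ 0) :
    OR.deg (OR.glue n (n-1)) (inl u) = n := by
  rw [OR.deg, Nat.card_coe_set_eq, nbhd u hu]
  rw [Set.ncard_union_eq (by simp) ((Set.toFinite _).image _) (Set.toFinite _)]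
  rw [Set.ncard_image_of_injective _ Sum.inl_injective, Set.ncard_singleton]
  have h1 : ({u} : Set (Fin n)).ncard + ({u}ᶜ : Set (Fin n)).ncard = n := by
    rw [Set.ncard_add_ncard_compl, Nat.card_eq_fintype_card, Fintype.card_fin]
  have h2 := Set.ncard_singleton u
  have h5 : 0 < n := Fin.pos u
  omega

lemma hub_adj [NeZero n] (w : Fin n ⊕ Fin n) (hw : w ≠ inl 0) :
    (OR.glue n (n-1)).Adj (inl (0:Fin n)) w := by
  cases w with
  | inl j =>
      have hj : j ≠ 0 := fun h => hw (by rw [h])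
      exact fun h => hj h.symm
  | inr j =>
      show OR.cross (n-1) 0 j
      unfold OR.cross
      have h0 : ((0:Fin n):ℕ) = 0 := rfl
      have hjlt : (j:ℕ) < n := j.isLt
      by_cases hj : (j:ℕ) = 0
      · exact Or.inl ⟨h0, hj⟩
      · exact Or.inr (Or.inl ⟨h0, by omega, by omega⟩)

lemma glue_conn [NeZero n] : (OR.glue n (n-1)).Connected := by
  rw [SimpleGraph.connected_iff]
  refine ⟨fun x y => ?_, ⟨inl 0⟩⟩
  have key : ∀ z, (OR.glue n (n-1)).Reachable (inl (0:Fin n)) z := by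
    intro z
    by_cases h : z = inl 0
    · rw [h]
    · exact (hub_adj z h).reachable
  exact (key x).symm.trans (key y)

theorem glue_ricci_inside (n : ℕ) (hn : 5 ≤ n) (u₁ u₂ : Fin n)
    (h₁₂ : u₁ ≠ u₂) (h₁ : (u₁ : ℕ) ≠ 0) (h₂ : (u₂ : ℕ) ≠ 0) :
    OR.ricci (OR.glue n (n - 1)) (Sum.inl u₁) (Sum.inl u₂) = ((n : ℝ) - 1) / n := by
  haveI : NeZero n := ⟨by omega⟩
  set G := OR.glue n (n-1) with hG
  have hnR : (0:ℝ) < n := by exact_mod_cast Nat.pos_of_ne_zero (by omega)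
  have hadj : G.Adj (inl u₁) (inl u₂) := h₁₂
  have hadj' : G.Adj (inl u₂) (inl u₁) := fun h => h₁₂ h.symm
  have hdist : G.dist (inl u₁) (inl u₂) = 1 := SimpleGraph.dist_eq_one_iff_adj.mpr hadj
  set μ := OR.rw G (inl u₁) with hμdef
  set ν := OR.rw G (inl u₂) with hνdef
  have hμ : ∀ w, μ w = if G.Adj (inl u₁) w then (n:ℝ)⁻¹ else 0 := by
    intro w; simp only [hμdef, OR.rw, hG, deg_eq u₁ h₁]
  have hν : ∀ w, ν w = if G.Adj (inl u₂) w then (n:ℝ)⁻¹ else 0 := by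
    intro w; simp only [hνdef, OR.rw, hG, deg_eq u₂ h₂]
  have hμ2 : μ (inl u₂) = (n:ℝ)⁻¹ := by rw [hμ, if_pos hadj]
  have hν2 : ν (inl u₂) = 0 := by rw [hν, if_neg (G.loopless.irrefl _)]
  have hμ1 : μ (inl u₁) = 0 := by rw [hμ, if_neg (G.loopless.irrefl _)]
  have hν1 : ν (inl u₁) = (n:ℝ)⁻¹ := by rw [hν, if_pos hadj']
  have hμnn : ∀ w, 0 ≤ μ w := by
    intro w; rw [hμ]; split_ifs <;> positivity
  have hνnn : ∀ w, 0 ≤ ν w := by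
    intro w; rw [hν]; split_ifs <;> positivity
  have hsame : ∀ w, w ≠ inl u₁ → w ≠ inl u₂ → μ w = ν w := by
    intro w hw1 hw2
    rw [hμ, hν]
    cases w with
    | inl j =>
        have hj1 : G.Adj (inl u₁) (inl j) := fun h => hw1 (congrArg Sum.inl h.symm)
        have hj2 : G.Adj (inl u₂) (inl j) := fun h => hw2 (congrArg Sum.inl h.symm)
        rw [if_pos hj1, if_pos hj2]
    | inr j =>
        have e1 : G.Adj (inl u₁) (inr j) ↔ (j:ℕ) = 0 := cross_iff' u₁ j h₁
        have e2 : G.Adj (inl u₂) (inr j) ↔ (j:ℕ) = 0 := cross_iff' u₂ j h₂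
        by_cases hj : (j:ℕ) = 0
        · rw [if_pos (e1.mpr hj), if_pos (e2.mpr hj)]
        · rw [if_neg (fun h => hj (e1.mp h)), if_neg (fun h => hj (e2.mp h))]
  have hW : OR.W G μ ν = (n:ℝ)⁻¹ := by
    have hd1 : ∀ u v : Fin n ⊕ Fin n, u ≠ v → (1:ℝ) ≤ (G.dist u v : ℝ) := by
      intro u v huv
      have hp : 0 < G.dist u v := (glue_conn (n := n)).pos_dist_of_ne huv
      exact_mod_cast hp
    set S := {r | ∃ A, OR.IsCoupling μ ν A ∧ r = ∑ᶠ u, ∑ᶠ v, A u v * (G.dist u v : ℝ)} with hS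
    have hWS : OR.W G μ ν = sInf S := rfl
    set A : (Fin n ⊕ Fin n) → (Fin n ⊕ Fin n) → ℝ :=
      fun x y => (if x = y then min (μ x) (ν x) else 0) +
        (if x = inl u₂ ∧ y = inl u₁ then (n:ℝ)⁻¹ else 0) with hA
    have hrow : ∀ u, ∑ v, A u v = μ u := by
      intro u
      rw [Finset.sum_add_distrib]
      have e1 : ∑ v, (if u = v then min (μ u) (ν u) else 0) = min (μ u) (ν u) := by
        simp
      have e2 : ∑ v : Fin n ⊕ Fin n, (if u = inl u₂ ∧ v = inl u₁ then (n:ℝ)⁻¹ else 0)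
          = if u = inl u₂ then (n:ℝ)⁻¹ else 0 := by
        by_cases hu : u = inl u₂ <;> simp [hu]
      rw [e1, e2]
      by_cases hu2 : u = inl u₂
      · subst hu2
        rw [hμ2, hν2, if_pos rfl, min_eq_right (by positivity : (0:ℝ) ≤ (n:ℝ)⁻¹), zero_add]
      · rw [if_neg hu2, add_zero]
        by_cases hu1 : u = inl u₁
        · subst hu1
          rw [hμ1, hν1, min_eq_left (by positivity : (0:ℝ) ≤ (n:ℝ)⁻¹)]
        · rw [hsame u hu1 hu2, min_self]
    have hcol : ∀ v, ∑ u, A u v = ν v := by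
      intro v
      rw [Finset.sum_add_distrib]
      have e1 : ∑ u, (if u = v then min (μ u) (ν u) else 0) = min (μ v) (ν v) := by
        simp
      have e2 : ∑ u : Fin n ⊕ Fin n, (if u = inl u₂ ∧ v = inl u₁ then (n:ℝ)⁻¹ else 0)
          = if v = inl u₁ then (n:ℝ)⁻¹ else 0 := by
        by_cases hv : v = inl u₁ <;> simp [hv]
      rw [e1, e2]
      by_cases hv1 : v = inl u₁
      · subst hv1
        rw [hμ1, hν1, if_pos rfl, min_eq_left (by positivity : (0:ℝ) ≤ (n:ℝ)⁻¹), zero_add]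
      · rw [if_neg hv1, add_zero]
        by_cases hv2 : v = inl u₂
        · subst hv2
          rw [hμ2, hν2, min_eq_right (by positivity : (0:ℝ) ≤ (n:ℝ)⁻¹)]
        · rw [hsame v hv1 hv2, min_self]
    have hcoup : OR.IsCoupling μ ν A := by
      refine ⟨?_, Set.toFinite _, ?_, ?_⟩
      · intro u v
        apply add_nonneg
        · split_ifs with h
          · exact le_min (hμnn u) (hνnn u)
          · exact le_rfl
        · split_ifs
          · positivity
          · exact le_rfl
      · intro u; rw [finsum_eq_sum_of_fintype]; exact hrow u
      · intro v; rw [finsum_eq_sum_of_fintype]; exact hcol v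
    have hcost : ∑ᶠ u, ∑ᶠ v, A u v * (G.dist u v : ℝ) = (n:ℝ)⁻¹ := by
      have hpt : ∀ u v, A u v * (G.dist u v : ℝ)
          = if u = inl u₂ ∧ v = inl u₁ then (n:ℝ)⁻¹ else 0 := by
        intro u v
        by_cases huv : u = v
        · subst huv
          rw [SimpleGraph.dist_self, Nat.cast_zero, mul_zero, if_neg]
          rintro ⟨ha, hb⟩
          exact h₁₂ (Sum.inl_injective (hb.symm.trans ha))
        · have hAuv : A u v = if u = inl u₂ ∧ v = inl u₁ then (n:ℝ)⁻¹ else 0 := by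
            rw [hA]; simp only []; rw [if_neg huv, zero_add]
          rw [hAuv]
          split_ifs with h
          · obtain ⟨ha, hb⟩ := h
            subst ha; subst hb
            rw [show G.dist (inl u₂) (inl u₁) = 1 from
              SimpleGraph.dist_eq_one_iff_adj.mpr hadj']
            norm_num
          · rw [zero_mul]
      rw [finsum_eq_sum_of_fintype]
      simp_rw [finsum_eq_sum_of_fintype, hpt]
      have hstep : ∀ u : Fin n ⊕ Fin n,
          ∑ v : Fin n ⊕ Fin n, (if u = inl u₂ ∧ v = inl u₁ then (n:ℝ)⁻¹ else 0)
            = if u = inl u₂ then (n:ℝ)⁻¹ else 0 := by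
        intro u; by_cases hu : u = inl u₂ <;> simp [hu]
      simp_rw [hstep]
      simp
    have hmem : (n:ℝ)⁻¹ ∈ S := ⟨A, hcoup, hcost.symm⟩
    have hlb : ∀ r ∈ S, (n:ℝ)⁻¹ ≤ r := by
      rintro r ⟨B, ⟨hBnn, -, hBrow, hBcol⟩, rfl⟩
      set f : Fin n ⊕ Fin n → ℝ := fun x => if x = inl u₂ then 1 else 0 with hf
      have hfb : ∀ u v : Fin n ⊕ Fin n, f u - f v ≤ (G.dist u v : ℝ) := by
        intro u v
        by_cases huv : u = v
        · subst huv; simp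
        · calc f u - f v ≤ 1 := by
                simp only [hf]; split_ifs <;> norm_num
            _ ≤ (G.dist u v : ℝ) := hd1 u v huv
      have hBrow' : ∀ u, ∑ v, B u v = μ u := fun u => by
        rw [← finsum_eq_sum_of_fintype]; exact hBrow u
      have hBcol' : ∀ v, ∑ u, B u v = ν v := fun v => by
        rw [← finsum_eq_sum_of_fintype]; exact hBcol v
      calc (n:ℝ)⁻¹ = ∑ u, f u * μ u - ∑ v, f v * ν v := by
              simp [hf, ite_mul, hμ2, hν2]
        _ = ∑ u, ∑ v, B u v * (f u - f v) := by
              simp_rw [mul_sub, Finset.sum_sub_distrib]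
              congr 1
              · refine Finset.sum_congr rfl fun u _ => ?_
                rw [← Finset.sum_mul, hBrow' u, mul_comm]
              · rw [Finset.sum_comm]
                refine Finset.sum_congr rfl fun v _ => ?_
                rw [← Finset.sum_mul, hBcol' v, mul_comm]
        _ ≤ ∑ u, ∑ v, B u v * (G.dist u v : ℝ) :=
              Finset.sum_le_sum fun u _ => Finset.sum_le_sum fun v _ =>
                mul_le_mul_of_nonneg_left (hfb u v) (hBnn u v)
        _ = ∑ᶠ u, ∑ᶠ v, B u v * (G.dist u v : ℝ) := by
              rw [finsum_eq_sum_of_fintype]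
              simp_rw [finsum_eq_sum_of_fintype]
    rw [hWS]
    exact le_antisymm (csInf_le ⟨(n:ℝ)⁻¹, fun r hr => hlb r hr⟩ hmem)
      (le_csInf ⟨_, hmem⟩ hlb)
  rw [OR.ricci, hW, hdist]
  push_cast
  field_simp
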